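/- arXiv:2506.05586 — 3 statements merged into one kernel-verified Lean document; each statement's English description precedes it below -/
import Mathlib

section
/- The partial derivative of the continuant K_k(a_1,...,a_k) (viewed as a polynomial in its k variables) with respect to a_l equals K_{l-1}(a_1,...,a_{l-1}) · K_{k-l}(a_{l+1},...,a_k). -/
/-- Continuant polynomial: K [] = 1, K [a] = a,
K (a :: b :: l) = a * K (b :: l) + K l. -/
def cont {R : Type*} [CommRing R] : List R → R
  | [] => 1
  | [a] => a
  | a :: b :: l => a * cont (b :: l) + cont l

open MvPolynomial

private theorem pderiv_cont_zero {k : ℕ} (d : Fin k)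
    (L : List (MvPolynomial (Fin k) ℝ)) (h : ∀ p ∈ L, pderiv d p = 0) :
    pderiv d (cont L) = 0 := by
  match L with
  | [] => simp [cont]
  | [a] => simpa [cont] using h a (by simp)
  | a :: b :: t =>
    have h1 := pderiv_cont_zero d (b :: t) (fun p hp => h p (by simp [hp]))
    have h2 := pderiv_cont_zero d t (fun p hp => h p (by simp [hp]))
    have ha := h a (by simp)
    simp [cont, Derivation.leibniz, h1, h2, ha]

private theorem pderiv_cont_key {k : ℕ} (d : Fin k)
    (l1 l2 : List (MvPolynomial (Fin k) ℝ))
    (h1 : ∀ p ∈ l1, pderiv d p = 0) (h2 : ∀ p ∈ l2, pderiv d p = 0) :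
    pderiv d (cont (l1 ++ X d :: l2)) = cont l1 * cont l2 := by
  match l1 with
  | [] =>
    match l2 with
    | [] => simp [cont]
    | b :: t =>
      have hz := pderiv_cont_zero d (b :: t) h2
      have hz' := pderiv_cont_zero d t (fun p hp => h2 p (by simp [hp]))
      simp [cont, Derivation.leibniz, hz, hz', pderiv_X_self]
  | [a] =>
    have ih := pderiv_cont_key d [] l2 (by simp) h2
    have ha := h1 a (by simp)
    simp only [List.cons_append, List.nil_append, cont] at ih ⊢
    cases l2 with
    | nil => simp_all [cont, Derivation.leibniz]
    | cons b t =>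
      have hz := pderiv_cont_zero d t (fun p hp => h2 p (by simp [hp]))
      simp_all [cont, Derivation.leibniz]
  | a :: b :: t =>
    have ih1 := pderiv_cont_key d (b :: t) l2 (fun p hp => h1 p (by simp [hp])) h2
    have ih2 := pderiv_cont_key d t l2 (fun p hp => h1 p (by simp [hp])) h2
    have ha := h1 a (by simp)
    simp only [List.cons_append, cont] at ih1 ih2 ⊢
    show (pderiv d) (a * cont (b :: (t ++ X d :: l2)) + cont (t ++ X d :: l2)) =
      (a * cont (b :: t) + cont t) * cont l2
    cases ht : t ++ X d :: l2 with
    | nil => simp at ht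
    | cons c s =>
      rw [ht] at ih1 ih2
      rw [map_add, Derivation.leibniz]
      simp only [smul_eq_mul, ha, ih1, ih2]
      ring

open MvPolynomial in
/-- The partial derivative of the continuant polynomial K_k(a_1,...,a_k)
with respect to a_l equals K_{l-1}(a_1,...,a_{l-1}) · K_{k-l}(a_{l+1},...,a_k).
Here variables are 0-indexed: `X l` is a_{l+1}. -/
theorem pderiv_continuant (k : ℕ) (l : Fin k) :
    pderiv l (cont (List.ofFn fun i : Fin k => (X i : MvPolynomial (Fin k) ℝ))) =
      cont (List.ofFn fun i : Fin (l : ℕ) =>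
          (X ⟨(i : ℕ), by omega⟩ : MvPolynomial (Fin k) ℝ)) *
        cont (List.ofFn fun i : Fin (k - (l : ℕ) - 1) =>
          (X ⟨(l : ℕ) + 1 + (i : ℕ), by omega⟩ : MvPolynomial (Fin k) ℝ)) := by
  have hsplit : (List.ofFn fun i : Fin k => (X i : MvPolynomial (Fin k) ℝ)) =
      (List.ofFn fun i : Fin (l : ℕ) =>
          (X ⟨(i : ℕ), by omega⟩ : MvPolynomial (Fin k) ℝ)) ++
        X l :: (List.ofFn fun i : Fin (k - (l : ℕ) - 1) =>
          (X ⟨(l : ℕ) + 1 + (i : ℕ), by omega⟩ : MvPolynomial (Fin k) ℝ)) := by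
    apply List.ext_getElem
    · simp; omega
    · intro n hn hn'
      simp only [List.length_ofFn] at hn hn'
      rcases lt_trichotomy n (l : ℕ) with h | h | h
      · rw [List.getElem_append_left (by simpa using h)]
        simp [List.getElem_ofFn]
      · rw [List.getElem_append_right (by simp; omega)]
        simp only [List.getElem_cons, List.length_ofFn]
        rw [dif_pos (by omega)]
        simp only [List.getElem_ofFn]
        congr 1
        exact Fin.eq_of_val_eq (by simpa using h)
      · rw [List.getElem_append_right (by simp; omega)]
        simp only [List.getElem_cons, List.length_ofFn]
        rw [dif_neg (by omega)]
        simp only [List.getElem_ofFn]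
        congr 1
        ext
        simp
        omega
  rw [hsplit]
  apply pderiv_cont_key
  · intro p hp
    simp only [List.mem_ofFn] at hp
    obtain ⟨i, rfl⟩ := hp
    exact pderiv_X_of_ne (by simp [Fin.ext_iff]; omega)
  · intro p hp
    simp only [List.mem_ofFn] at hp
    obtain ⟨i, rfl⟩ := hp
    exact pderiv_X_of_ne (by simp [Fin.ext_iff]; omega)
end

section
/- For the continued fraction value f(a_0,...,a_d) = K_{d+1}(a_0,...,a_d)/K_d(a_1,...,a_d), the partial derivative with respect to a_k satisfies ∂f/∂a_k = (−1)^k · (K_{d−k}(a_{k+1},...,a_d)/K_d(a_1,...,a_d))², at any point where K_d(a_1,...,a_d) ≠ 0. -/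
namespace ContAux

/-- "Continuant of the tail", with K₋₁ = 0 convention for the empty list. -/
def cont' : List ℝ → ℝ
  | [] => 0
  | _ :: l => cont l

def CM (a : ℝ) : Matrix (Fin 2) (Fin 2) ℝ := !![a, 1; 1, 0]

lemma cont_cons (a : ℝ) (l : List ℝ) : cont (a :: l) = a * cont l + cont' l := by
  cases l <;> simp [cont, cont']

lemma prod_entries (l : List ℝ) :
    ((l.map CM).prod) 0 0 = cont l ∧ ((l.map CM).prod) 1 0 = cont' l := by
  induction l with
  | nil => simp [cont, cont']
  | cons a l ih =>
    constructor <;>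
    simp [List.prod_cons, Matrix.mul_apply, Fin.sum_univ_two, CM, ih.1, ih.2, cont_cons, cont']

lemma det_prod (l : List ℝ) : ((l.map CM).prod).det = (-1) ^ l.length := by
  induction l with
  | nil => simp
  | cons a l ih =>
    rw [List.map_cons, List.prod_cons, Matrix.det_mul, ih]
    simp [CM, Matrix.det_fin_two_of, pow_succ]

end ContAux

namespace ContAux

lemma main (P S : List ℝ) (t₀ : ℝ) (h : cont' (P ++ t₀ :: S) ≠ 0) :
    HasDerivAt (fun t : ℝ => cont (P ++ t :: S) / cont' (P ++ t :: S))
      ((-1) ^ P.length * (cont S / cont' (P ++ t₀ :: S)) ^ 2) t₀ := by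
  set U := (P.map CM).prod with hU
  set V := (S.map CM).prod with hV
  have hN : ∀ t : ℝ, cont (P ++ t :: S) =
      (U 0 0 * V 0 0) * t + (U 0 0 * V 1 0 + U 0 1 * V 0 0) := by
    intro t
    rw [← (prod_entries (P ++ t :: S)).1, List.map_append, List.map_cons,
      List.prod_append, List.prod_cons]
    simp [Matrix.mul_apply, Matrix.vecMul, dotProduct, Fin.sum_univ_two, CM, hU, hV]
    ring
  have hD : ∀ t : ℝ, cont' (P ++ t :: S) =
      (U 1 0 * V 0 0) * t + (U 1 0 * V 1 0 + U 1 1 * V 0 0) := by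
    intro t
    rw [← (prod_entries (P ++ t :: S)).2, List.map_append, List.map_cons,
      List.prod_append, List.prod_cons]
    simp [Matrix.mul_apply, Matrix.vecMul, dotProduct, Fin.sum_univ_two, CM, hU, hV]
    ring
  have hden : (U 1 0 * V 0 0) * t₀ + (U 1 0 * V 1 0 + U 1 1 * V 0 0) ≠ 0 := by
    rw [← hD t₀]; exact h
  have H1 : HasDerivAt (fun t : ℝ => (U 0 0 * V 0 0) * t + (U 0 0 * V 1 0 + U 0 1 * V 0 0))
      (U 0 0 * V 0 0) t₀ := by
    simpa using ((hasDerivAt_id t₀).const_mul (U 0 0 * V 0 0)).add_const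
      (U 0 0 * V 1 0 + U 0 1 * V 0 0)
  have H2 : HasDerivAt (fun t : ℝ => (U 1 0 * V 0 0) * t + (U 1 0 * V 1 0 + U 1 1 * V 0 0))
      (U 1 0 * V 0 0) t₀ := by
    simpa using ((hasDerivAt_id t₀).const_mul (U 1 0 * V 0 0)).add_const
      (U 1 0 * V 1 0 + U 1 1 * V 0 0)
  have H := H1.div H2 hden
  have hdet : U 0 0 * U 1 1 - U 0 1 * U 1 0 = (-1) ^ P.length := by
    rw [← Matrix.det_fin_two U]; exact det_prod P
  have hS : cont S = V 0 0 := ((prod_entries S).1).symm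
  have hfun : (fun t : ℝ => cont (P ++ t :: S) / cont' (P ++ t :: S)) =
      (fun t : ℝ => ((U 0 0 * V 0 0) * t + (U 0 0 * V 1 0 + U 0 1 * V 0 0)) /
        ((U 1 0 * V 0 0) * t + (U 1 0 * V 1 0 + U 1 1 * V 0 0))) := by
    funext t; rw [hN t, hD t]
  rw [hfun, hD t₀, hS, ← hdet]
  refine H.congr_deriv ?_
  rw [div_pow, mul_div_assoc', div_eq_div_iff (pow_ne_zero 2 hden) (pow_ne_zero 2 hden)]
  ring
end ContAux

namespace ContAux

lemma ofFn_split (n : ℕ) (k : Fin (n + 1)) (f : Fin (n + 1) → ℝ) :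
    List.ofFn f = (List.ofFn fun i : Fin k => f ⟨i, by omega⟩) ++
      f k :: List.ofFn fun i : Fin (n - (k : ℕ)) => f ⟨(k : ℕ) + 1 + (i : ℕ), by have := i.2; omega⟩ := by
  apply List.ext_getElem
  · simp; omega
  · intro i h1 h2
    rw [List.getElem_ofFn]
    rcases lt_trichotomy i (k : ℕ) with hi | hi | hi
    · rw [List.getElem_append_left (by simpa using hi), List.getElem_ofFn]
    · subst hi
      rw [List.getElem_append_right (by simp)]
      simp only [List.length_ofFn, Nat.sub_self, List.getElem_cons_zero]
    · rw [List.getElem_append_right (by simp; omega)]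
      simp only [List.length_ofFn, List.getElem_cons]
      rw [dif_neg (by omega), List.getElem_ofFn]
      exact congrArg f (Fin.ext (by simp; omega))

lemma cont'_ofFn (n : ℕ) (g : Fin (n + 1) → ℝ) :
    cont' (List.ofFn g) = cont (List.ofFn fun i : Fin n => g i.succ) := by
  rw [List.ofFn_succ]; rfl

end ContAux


/-- For f(a_0,...,a_d) = K_{d+1}(a_0,...,a_d)/K_d(a_1,...,a_d), the partial
derivative with respect to a_k is
(−1)^k · (K_{d−k}(a_{k+1},...,a_d)/K_d(a_1,...,a_d))², at any point where
K_d(a_1,...,a_d) ≠ 0. -/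
theorem hasDerivAt_continuant_ratio (d : ℕ) (k : Fin (d + 1)) (a : Fin (d + 1) → ℝ)
    (h : cont (List.ofFn fun i : Fin d => a i.succ) ≠ 0) :
    HasDerivAt
      (fun t : ℝ =>
        cont (List.ofFn (Function.update a k t)) /
          cont (List.ofFn fun i : Fin d => Function.update a k t i.succ))
      ((-1) ^ (k : ℕ) *
        (cont (List.ofFn fun i : Fin (d - (k : ℕ)) => a ⟨(k : ℕ) + 1 + (i : ℕ), by omega⟩) /
            cont (List.ofFn fun i : Fin d => a i.succ)) ^ 2)
      (a k) := by
  classical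
  set P : List ℝ := List.ofFn fun i : Fin k => a ⟨i, by omega⟩ with hP
  set S : List ℝ := (List.ofFn fun i : Fin (d - (k : ℕ)) =>
    a ⟨(k : ℕ) + 1 + (i : ℕ), by omega⟩) with hS
  have key : ∀ t : ℝ, List.ofFn (Function.update a k t) = P ++ t :: S := by
    intro t
    rw [ContAux.ofFn_split d k (Function.update a k t)]
    congr 1
    · rw [hP]
      congr 1
      funext i
      rw [Function.update_of_ne]
      exact fun hh => by have := congrArg Fin.val hh; simp at this; omega
    · rw [Function.update_self]
      congr 1
      rw [hS]
      congr 1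
      funext i
      rw [Function.update_of_ne]
      exact fun hh => by have := congrArg Fin.val hh; simp at this; omega
  have keyA : List.ofFn a = P ++ (a k) :: S := by
    have := key (a k); rwa [Function.update_eq_self] at this
  have hden0 : ContAux.cont' (P ++ (a k) :: S) = cont (List.ofFn fun i : Fin d => a i.succ) := by
    rw [← keyA, ContAux.cont'_ofFn]
  have h' : ContAux.cont' (P ++ (a k) :: S) ≠ 0 := by rwa [hden0]
  have H := ContAux.main P S (a k) h'
  have hfun : (fun t : ℝ =>
        cont (List.ofFn (Function.update a k t)) /
          cont (List.ofFn fun i : Fin d => Function.update a k t i.succ)) =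
      (fun t : ℝ => cont (P ++ t :: S) / ContAux.cont' (P ++ t :: S)) := by
    funext t
    rw [← ContAux.cont'_ofFn d (Function.update a k t), key t]
  rw [hfun]
  have hlen : P.length = (k : ℕ) := by simp [hP]
  rw [hlen, hden0] at H
  exact H
end

section
/- The set of finite linear combinations of finite-depth continued fractions with affine numerators and denominators (⋃_{L≥1} ⊕^L CFL), restricted to functions defined and continuous on [0,1]^p, is dense in C([0,1]^p, ℝ) in the supremum norm. -/
/-- \`cflT N D d m\` is the tail t_{d-m} of the continued fraction with
numerators N k and extra denominator terms D k:
t_d = N d / (1 + D d), and t_k = N k / (1 + D k + t_{k+1}). -/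
noncomputable def cflT (N D : ℕ → ℝ) (d : ℕ) : ℕ → ℝ
  | 0 => N d / (1 + D d)
  | m + 1 => N (d - (m + 1)) / (1 + D (d - (m + 1)) + cflT N D d m)

/-- Value of the continued fraction N 0 /(1 + N 1/(1 + D 1 + N 2/(1 + D 2 + ...)))
of depth d; depth 0 is just N 0. -/
noncomputable def cflVal (N D : ℕ → ℝ) : ℕ → ℝ
  | 0 => N 0
  | d + 1 => N 0 / (1 + cflT N D (d + 1) d)

/-- Data of a member of the class CFL: a finite-depth continued fraction with
affine numerators v_kᵀx + α_k and denominators 1 + w_kᵀx + β_k. -/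
structure CFLData (p : ℕ) where
  d : ℕ
  v : ℕ → Fin p → ℝ
  a : ℕ → ℝ
  w : ℕ → Fin p → ℝ
  b : ℕ → ℝ

/-- Numerators N_k(x) = v_kᵀx + α_k. -/
noncomputable def CFLData.N {p : ℕ} (F : CFLData p) (x : Fin p → ℝ) : ℕ → ℝ :=
  fun k => (∑ i, F.v k i * x i) + F.a k

/-- Denominator terms D_k(x) = w_kᵀx + β_k. -/
noncomputable def CFLData.D {p : ℕ} (F : CFLData p) (x : Fin p → ℝ) : ℕ → ℝ :=
  fun k => (∑ i, F.w k i * x i) + F.b k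

/-- The value at x of the CFL continued fraction. -/
noncomputable def CFLData.val {p : ℕ} (F : CFLData p) (x : Fin p → ℝ) : ℝ :=
  cflVal (F.N x) (F.D x) F.d

/-- All intermediate denominators of the continued fraction are nonzero at x. -/
def CFLData.DenomOK {p : ℕ} (F : CFLData p) (x : Fin p → ℝ) : Prop :=
  match F.d with
  | 0 => True
  | d + 1 =>
      (1 + F.D x (d + 1) ≠ 0) ∧
      (∀ m < d, 1 + F.D x (d + 1 - (m + 1)) + cflT (F.N x) (F.D x) (d + 1) m ≠ 0) ∧
      (1 + cflT (F.N x) (F.D x) (d + 1) d ≠ 0)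

/-- The unit cube [0,1]^p. -/
def Cube (p : ℕ) : Set (Fin p → ℝ) := Set.Icc 0 1

namespace Euler

/-- Euler tail products: `Tr a d m = S_{d-m}` where `S_d = a d`, `S_k = a k * (1 + S_(k+1))`. -/
noncomputable def Tr (a : ℕ → ℝ) (d : ℕ) : ℕ → ℝ
  | 0 => a d
  | m + 1 => a (d - (m + 1)) * (1 + Tr a d m)

variable {a N D : ℕ → ℝ}

lemma Tr_nonneg (ha : ∀ k, 1 ≤ k → 0 ≤ a k) :
    ∀ m, m + 1 ≤ (d : ℕ) → 0 ≤ Tr a d m := by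
  intro m
  induction m with
  | zero => intro h; exact ha d h
  | succ m ih =>
    intro h
    have h1 : 0 ≤ Tr a d m := ih (by omega)
    have h2 : 0 ≤ a (d - (m + 1)) := ha _ (by omega)
    simpa [Tr] using mul_nonneg h2 (by linarith)

lemma onePlusTr_pos (ha : ∀ k, 1 ≤ k → 0 ≤ a k) {d m : ℕ} (h : m + 1 ≤ d) :
    0 < 1 + Tr a d m := by
  have := Tr_nonneg ha m h
  linarith

lemma cflT_euler (ha : ∀ k, 1 ≤ k → 0 ≤ a k)
    (hN : ∀ k, 1 ≤ k → N k = -a k) (hD : ∀ k, 1 ≤ k → D k = a k) :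
    ∀ m, m + 1 ≤ (d : ℕ) → cflT N D d m = -Tr a d m / (1 + Tr a d m) := by
  intro m
  induction m with
  | zero =>
    intro h
    simp only [cflT, Tr, hN d h, hD d h]
  | succ m ih =>
    intro h
    have hm : m + 1 ≤ d := by omega
    have h1 : 0 < 1 + Tr a d m := onePlusTr_pos ha hm
    have hk : 1 ≤ d - (m + 1) := by omega
    have h2 : 0 < 1 + Tr a d (m + 1) := onePlusTr_pos ha h
    have key : 1 + D (d - (m+1)) + cflT N D d m = (1 + Tr a d (m + 1)) / (1 + Tr a d m) := by
      rw [ih hm, hD _ hk]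
      show _ = (1 + a (d - (m+1)) * (1 + Tr a d m)) / (1 + Tr a d m)
      field_simp
      ring
    rw [show cflT N D d (m+1) = N (d - (m + 1)) / (1 + D (d - (m + 1)) + cflT N D d m) from rfl,
      key, hN _ hk]
    show _ = -(a (d - (m+1)) * (1 + Tr a d m)) / (1 + Tr a d (m+1))
    rw [div_div_eq_mul_div, neg_mul]

lemma val_euler (ha : ∀ k, 1 ≤ k → 0 ≤ a k)
    (hN : ∀ k, 1 ≤ k → N k = -a k) (hD : ∀ k, 1 ≤ k → D k = a k) (d : ℕ) :
    cflVal N D (d + 1) = N 0 * (1 + Tr a (d + 1) d) := by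
  have h2 : 0 < 1 + Tr a (d+1) d := onePlusTr_pos ha le_rfl
  rw [show cflVal N D (d+1) = N 0 / (1 + cflT N D (d + 1) d) from rfl,
    cflT_euler ha hN hD d le_rfl]
  have : 1 + -Tr a (d+1) d / (1 + Tr a (d+1) d) = 1 / (1 + Tr a (d+1) d) := by
    field_simp
    ring
  rw [this]
  field_simp

end Euler

namespace Euler
variable {a N D : ℕ → ℝ}

lemma Tr_diff : ∀ m, m + 2 ≤ (d : ℕ) →
    Tr a d (m + 1) - Tr a (d - 1) m = ∏ j ∈ Finset.range (m + 2), a (d - (m + 1) + j) := by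
  intro m
  induction m with
  | zero =>
    intro h
    have e1 : d - 1 = d - (0 + 1) := rfl
    have e2 : d - 1 + 1 = d := by omega
    show a (d - 1) * (1 + Tr a d 0) - a (d - 1) = _
    rw [show Tr a d 0 = a d from rfl, Finset.prod_range_succ, Finset.prod_range_one]
    rw [show d - (0+1) + 0 = d - 1 by omega, show d - (0+1) + 1 = d by omega]
    ring
  | succ m ih =>
    intro h
    have hm : m + 2 ≤ d := by omega
    have e1 : d - 1 - (m + 1) = d - (m + 2) := by omega
    show a (d - (m + 2)) * (1 + Tr a d (m + 1)) - a (d - 1 - (m + 1)) * (1 + Tr a (d-1) m) = _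
    rw [e1]
    have : a (d - (m + 2)) * (1 + Tr a d (m + 1)) - a (d - (m + 2)) * (1 + Tr a (d-1) m)
        = a (d - (m + 2)) * (Tr a d (m + 1) - Tr a (d-1) m) := by ring
    rw [this, ih hm]
    have expand : ∏ j ∈ Finset.range (m + 1 + 2), a (d - (m + 1 + 1) + j)
        = a (d - (m + 2)) * ∏ j ∈ Finset.range (m + 2), a (d - (m + 1) + j) := by
      rw [Finset.prod_range_succ', show d - (m + 1 + 1) + 0 = d - (m + 2) by omega, mul_comm]
      congr 1
      apply Finset.prod_congr rfl
      intro j _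
      congr 1
      omega
    rw [expand]

lemma val_diff (ha : ∀ k, 1 ≤ k → 0 ≤ a k)
    (hN : ∀ k, 1 ≤ k → N k = -a k) (hD : ∀ k, 1 ≤ k → D k = a k) :
    ∀ d : ℕ, 1 ≤ d →
      cflVal N D d - cflVal N D (d - 1) = N 0 * ∏ j ∈ Finset.range d, a (j + 1) := by
  intro d hd
  match d, hd with
  | 1, _ =>
    rw [val_euler ha hN hD 0]
    show N 0 * (1 + Tr a 1 0) - N 0 = _
    rw [show Tr a 1 0 = a 1 from rfl, Finset.prod_range_one]
    ring
  | (e + 2), _ =>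
    rw [val_euler ha hN hD (e + 1), show e + 2 - 1 = e + 1 from rfl, val_euler ha hN hD e]
    have h := Tr_diff (d := e + 2) (a := a) e le_rfl
    rw [show e + 2 - 1 = e + 1 from rfl] at h
    have : N 0 * (1 + Tr a (e+2) (e+1)) - N 0 * (1 + Tr a (e+1) e)
        = N 0 * (Tr a (e+2) (e+1) - Tr a (e+1) e) := by ring
    rw [this, h]
    congr 1
    apply Finset.prod_congr rfl
    intro j _
    congr 1
    omega

lemma denoms_ok (ha : ∀ k, 1 ≤ k → 0 ≤ a k)
    (hN : ∀ k, 1 ≤ k → N k = -a k) (hD : ∀ k, 1 ≤ k → D k = a k) (e : ℕ) :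
    (1 + D (e + 1) ≠ 0) ∧
    (∀ m < e, 1 + D (e + 1 - (m + 1)) + cflT N D (e + 1) m ≠ 0) ∧
    (1 + cflT N D (e + 1) e ≠ 0) := by
  refine ⟨?_, ?_, ?_⟩
  · rw [hD _ (by omega)]
    have := ha (e + 1) (by omega); intro hc; linarith
  · intro m hm
    have hm1 : m + 1 ≤ e + 1 := by omega
    have h1 : 0 < 1 + Tr a (e+1) m := onePlusTr_pos ha hm1
    have h2 : 0 < 1 + Tr a (e+1) (m+1) := onePlusTr_pos ha (by omega)
    rw [cflT_euler ha hN hD m hm1, hD _ (by omega)]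
    have key : 1 + a (e + 1 - (m+1)) + -Tr a (e+1) m / (1 + Tr a (e+1) m)
        = (1 + Tr a (e+1) (m + 1)) / (1 + Tr a (e+1) m) := by
      show _ = (1 + a (e + 1 - (m+1)) * (1 + Tr a (e+1) m)) / (1 + Tr a (e+1) m)
      field_simp
      ring
    rw [key]
    positivity
  · have h1 : 0 < 1 + Tr a (e+1) e := onePlusTr_pos ha le_rfl
    rw [cflT_euler ha hN hD e le_rfl]
    have : 1 + -Tr a (e+1) e / (1 + Tr a (e+1) e) = 1 / (1 + Tr a (e+1) e) := by field_simp; ring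
    rw [this]
    positivity

end Euler

namespace CFLProof

/-- coefficient vector for the k-th factor of the list `l`. -/
noncomputable def sfun {p : ℕ} (l : List (Fin p)) (k : ℕ) : Fin p → ℝ :=
  (l[k]?).elim 0 (fun i => Pi.single i 1)

/-- the CFLData encoding the Euler continued fraction of depth `d` with factors from `l`. -/
noncomputable def cfd {p : ℕ} (l : List (Fin p)) (d : ℕ) : CFLData p where
  d := d
  v := fun k => if k = 0 then 0 else -(sfun l (k - 1))
  a := fun k => if k = 0 then 1 else 0
  w := fun k => sfun l (k - 1)
  b := fun _ => 0

/-- the k-th factor value. -/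
noncomputable def sval {p : ℕ} (l : List (Fin p)) (x : Fin p → ℝ) (k : ℕ) : ℝ :=
  ∑ i, sfun l k i * x i

/-- a-sequence of the Euler fraction at `x`. -/
noncomputable def av {p : ℕ} (l : List (Fin p)) (x : Fin p → ℝ) (k : ℕ) : ℝ :=
  if k = 0 then 1 else sval l x (k - 1)

lemma sval_eq {p : ℕ} (l : List (Fin p)) (x : Fin p → ℝ) (k : ℕ) :
    sval l x k = (l[k]?).elim 0 x := by
  unfold sval sfun
  cases h : l[k]? with
  | none => simp
  | some i =>
    simp only [Option.elim]
    rw [Finset.sum_eq_single i]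
    · simp
    · intro j _ hj; simp [Pi.single_apply, hj]
    · simp

lemma sval_nonneg {p : ℕ} (l : List (Fin p)) {x : Fin p → ℝ} (hx : x ∈ Cube p) (k : ℕ) :
    0 ≤ sval l x k := by
  rw [sval_eq]
  cases h : l[k]? with
  | none => simp
  | some i => exact (hx.1 i : (0:ℝ) ≤ x i)

lemma av_nonneg {p : ℕ} (l : List (Fin p)) {x : Fin p → ℝ} (hx : x ∈ Cube p) :
    ∀ k, 1 ≤ k → 0 ≤ av l x k := by
  intro k hk
  unfold av
  rw [if_neg (by omega)]
  exact sval_nonneg l hx _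

lemma cfd_N {p : ℕ} (l : List (Fin p)) (d : ℕ) (x : Fin p → ℝ) :
    ∀ k, 1 ≤ k → (cfd l d).N x k = -av l x k := by
  intro k hk
  unfold CFLData.N cfd av sval
  simp only [if_neg (by omega : ¬ k = 0)]
  simp [Finset.sum_neg_distrib, neg_mul]

lemma cfd_N0 {p : ℕ} (l : List (Fin p)) (d : ℕ) (x : Fin p → ℝ) :
    (cfd l d).N x 0 = 1 := by
  unfold CFLData.N cfd
  simp

lemma cfd_D {p : ℕ} (l : List (Fin p)) (d : ℕ) (x : Fin p → ℝ) :
    ∀ k, 1 ≤ k → (cfd l d).D x k = av l x k := by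
  intro k hk
  unfold CFLData.D cfd av sval
  simp [if_neg (by omega : ¬ k = 0)]

lemma cfd_denomOK {p : ℕ} (l : List (Fin p)) (d : ℕ) {x : Fin p → ℝ} (hx : x ∈ Cube p) :
    (cfd l d).DenomOK x := by
  cases d with
  | zero => trivial
  | succ e =>
    exact Euler.denoms_ok (av_nonneg l hx) (cfd_N l (e+1) x) (cfd_D l (e+1) x) e

lemma cfd_val_diff {p : ℕ} (l : List (Fin p)) {x : Fin p → ℝ} (hx : x ∈ Cube p)
    (d : ℕ) (hd : 1 ≤ d) :
    (cfd l d).val x - (cfd l (d - 1)).val x = ∏ j ∈ Finset.range d, sval l x j := by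
  have hND : ∀ e : ℕ, (cfd l e).N x = (cfd l d).N x ∧ (cfd l e).D x = (cfd l d).D x := by
    intro e; constructor <;> rfl
  have h := Euler.val_diff (a := av l x) (av_nonneg l hx) (cfd_N l d x) (cfd_D l d x) d hd
  unfold CFLData.val
  rw [show (cfd l d).d = d from rfl, show (cfd l (d-1)).d = d - 1 from rfl,
    (hND (d-1)).1, (hND (d-1)).2, h, cfd_N0]
  rw [one_mul]
  apply Finset.prod_congr rfl
  intro j _
  unfold av
  rw [if_neg (by omega)]
  norm_num

lemma cfd_val_zero {p : ℕ} (l : List (Fin p)) (x : Fin p → ℝ) :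
    (cfd l 0).val x = 1 := by
  unfold CFLData.val
  rw [show (cfd l 0).d = 0 from rfl]
  show (cfd l 0).N x 0 = 1
  exact cfd_N0 l 0 x

lemma prod_sval {p : ℕ} (x : Fin p → ℝ) :
    ∀ l : List (Fin p), ∏ j ∈ Finset.range l.length, sval l x j = (l.map x).prod := by
  intro l
  induction l with
  | nil => simp
  | cons h t ih =>
    rw [show (h :: t).length = t.length + 1 from rfl, Finset.prod_range_succ']
    have h0 : sval (h :: t) x 0 = x h := by
      rw [sval_eq]; simp
    have hs : ∀ j, sval (h :: t) x (j + 1) = sval t x j := by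
      intro j; rw [sval_eq, sval_eq, List.getElem?_cons_succ]
    simp only [hs, h0, ih]
    rw [List.map_cons, List.prod_cons, mul_comm]

end CFLProof

namespace CFLProof

variable {p : ℕ}

instance : CompactSpace (Cube p) := isCompact_iff_compactSpace.mp isCompact_Icc

/-- the i-th coordinate as a continuous map on the cube. -/
noncomputable def coordFn (p : ℕ) (i : Fin p) : C(Cube p, ℝ) :=
  ⟨fun x => (x : Fin p → ℝ) i, (continuous_apply i).comp continuous_subtype_val⟩

/-- representability by a finite linear combination of CFL fractions. -/
def Rep (p : ℕ) (f : C(Cube p, ℝ)) : Prop :=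
  ∃ (L : ℕ) (F : Fin L → CFLData p) (γ : Fin L → ℝ),
    (∀ x : Cube p, ∀ i, (F i).DenomOK x) ∧
    ∀ x : Cube p, f x = ∑ i, γ i * (F i).val x

lemma Rep_zero : Rep p 0 := ⟨0, fun i => i.elim0, fun i => i.elim0, fun _ i => i.elim0,
  fun x => by simp⟩

lemma Rep_add {f g : C(Cube p, ℝ)} (hf : Rep p f) (hg : Rep p g) : Rep p (f + g) := by
  obtain ⟨L1, F1, γ1, hOK1, hE1⟩ := hf
  obtain ⟨L2, F2, γ2, hOK2, hE2⟩ := hg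
  refine ⟨L1 + L2, Fin.append F1 F2, Fin.append γ1 γ2, ?_, ?_⟩
  · intro x i
    refine Fin.addCases (fun j => ?_) (fun j => ?_) i
    · rw [Fin.append_left]; exact hOK1 x j
    · rw [Fin.append_right]; exact hOK2 x j
  · intro x
    rw [Fin.sum_univ_add]
    simp only [Fin.append_left, Fin.append_right]
    rw [ContinuousMap.add_apply, hE1 x, hE2 x]

lemma Rep_smul (c : ℝ) {f : C(Cube p, ℝ)} (hf : Rep p f) : Rep p (c • f) := by
  obtain ⟨L, F, γ, hOK, hE⟩ := hf
  refine ⟨L, F, fun i => c * γ i, hOK, fun x => ?_⟩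
  rw [ContinuousMap.smul_apply, hE x, smul_eq_mul, Finset.mul_sum]
  apply Finset.sum_congr rfl
  intro i _
  ring

/-- the monomial `x ↦ ∏ i, x i ^ m i` as a continuous map on the cube. -/
noncomputable def mono (m : Fin p →₀ ℕ) : C(Cube p, ℝ) :=
  ⟨fun x => m.prod fun i e => (x : Fin p → ℝ) i ^ e, by
    apply continuous_finset_prod
    intro i _
    exact ((continuous_apply i).comp continuous_subtype_val).pow _⟩

lemma mono_eq (m : Fin p →₀ ℕ) (x : Cube p) :
    mono m x = ((m.toMultiset.toList).map (x : Fin p → ℝ)).prod := by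
  rw [← Multiset.prod_coe, ← Multiset.map_coe, Multiset.coe_toList,
    Finsupp.toMultiset_map, Finsupp.prod_toMultiset,
    Finsupp.prod_mapDomain_index (fun b => pow_zero b) (fun b m₁ m₂ => pow_add _ _ _)]
  rfl

lemma Rep_mono (c : ℝ) (m : Fin p →₀ ℕ) : Rep p (c • mono m) := by
  set l : List (Fin p) := m.toMultiset.toList with hl
  have key : ∀ x : Cube p, mono m x = ∏ j ∈ Finset.range l.length, sval l (x : Fin p → ℝ) j := by
    intro x
    rw [mono_eq, prod_sval]
  cases hd : l.length with
  | zero =>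
    refine ⟨1, fun _ => cfd l 0, fun _ => c, fun x i => cfd_denomOK l 0 x.2, fun x => ?_⟩
    rw [ContinuousMap.smul_apply, key x, hd]
    simp [cfd_val_zero]
  | succ e =>
    refine ⟨2, ![cfd l (e + 1), cfd l e], ![c, -c], ?_, ?_⟩
    · intro x i
      fin_cases i
      · exact cfd_denomOK l (e + 1) x.2
      · exact cfd_denomOK l e x.2
    · intro x
      have hdiff := cfd_val_diff l x.2 (e + 1) (by omega)
      rw [show e + 1 - 1 = e from rfl] at hdiff
      rw [ContinuousMap.smul_apply, key x, hd, ← hdiff]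
      rw [Fin.sum_univ_two]
      simp only [Matrix.cons_val_zero, Matrix.cons_val_one, Matrix.head_cons, smul_eq_mul]
      ring

lemma Rep_of_mem_adjoin {f : C(Cube p, ℝ)}
    (hf : f ∈ Algebra.adjoin ℝ (Set.range (coordFn p))) : Rep p f := by
  rw [Algebra.adjoin_range_eq_range_aeval, AlgHom.mem_range] at hf
  obtain ⟨P, hP⟩ := hf
  rw [← hP, ← MvPolynomial.support_sum_monomial_coeff P, map_sum]
  apply Finset.sum_induction _ (Rep p) (fun _ _ => Rep_add) Rep_zero
  intro m _
  have : (MvPolynomial.aeval (coordFn p)) (MvPolynomial.monomial m (MvPolynomial.coeff m P))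
      = (MvPolynomial.coeff m P) • mono m := by
    rw [MvPolynomial.aeval_monomial, Algebra.smul_def]
    congr 1
    ext x
    show (Finsupp.prod m fun i e => coordFn p i ^ e) x = mono m x
    rw [Finsupp.prod, ContinuousMap.prod_apply]
    show _ = Finsupp.prod m fun i e => (x : Fin p → ℝ) i ^ e
    rw [Finsupp.prod]
    apply Finset.prod_congr rfl
    intro i _
    rfl
  rw [this]
  exact Rep_mono _ m

end CFLProof


/-- Finite linear combinations of CFL continued fractions that are defined
(all denominators nonzero) and continuous on [0,1]^p are dense in
C([0,1]^p, ℝ) in the supremum norm. -/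
theorem CFL_combinations_dense (p : ℕ) (G : C(Cube p, ℝ)) (ε : ℝ) (hε : 0 < ε) :
    ∃ (L : ℕ) (F : Fin L → CFLData p) (γ : Fin L → ℝ),
      (∀ x : Cube p, ∀ i, (F i).DenomOK x) ∧
      Continuous (fun x : Cube p => ∑ i, γ i * (F i).val x) ∧
      ∀ x : Cube p, |G x - ∑ i, γ i * (F i).val x| < ε := by
  classical
  set A := Algebra.adjoin ℝ (Set.range (CFLProof.coordFn p)) with hA
  have hsep : A.SeparatesPoints := by
    intro x y hxy
    have hne : (x : Fin p → ℝ) ≠ y := fun h => hxy (Subtype.ext h)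
    rw [Function.ne_iff] at hne
    obtain ⟨i, hi⟩ := hne
    exact ⟨_, ⟨CFLProof.coordFn p i, Algebra.subset_adjoin ⟨i, rfl⟩, rfl⟩, hi⟩
  obtain ⟨⟨ψ, hψA⟩, hnorm⟩ :=
    ContinuousMap.exists_mem_subalgebra_near_continuousMap_of_separatesPoints A hsep G ε hε
  obtain ⟨L, F, γ, hOK, hE⟩ := CFLProof.Rep_of_mem_adjoin hψA
  have hfun : (fun x : Cube p => ∑ i, γ i * (F i).val x) = ψ := funext fun x => (hE x).symm
  refine ⟨L, F, γ, hOK, by rw [hfun]; exact ψ.continuous, fun x => ?_⟩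
  have h1 : |G x - ∑ i, γ i * (F i).val x| = |(ψ - G) x| := by
    rw [← hE x, ContinuousMap.sub_apply, abs_sub_comm]
  rw [h1]
  calc |(ψ - G) x| ≤ ‖ψ - G‖ := by
        simpa [Real.norm_eq_abs] using (ψ - G).norm_coe_le_norm x
    _ < ε := hnorm
end
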